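/- Let X ∈ ℝ^{d_in×n}, Y ∈ ℝ^{d_out×n}, and let σ: ℝ → ℝ be applied entrywise. If σ(0) = 0, σ is differentiable at 0, and σ'(0) ≠ 0, then E_σ(r) ≤ E_id(r), i.e. the infimum over A ∈ ℝ^{r×d_in}, B ∈ ℝ^{d_out×r} of ‖Y − B σ(A X)‖_F is at most the infimum over A ∈ ℝ^{r×d_in}, B ∈ ℝ^{d_out×r} of ‖Y − B A X‖_F. -/

import Mathlib

open scoped BigOperators

namespace CoLA

noncomputable section

/-- Frobenius norm of a real matrix. -/
def frobNorm {m n : ℕ} (M : Matrix (Fin m) (Fin n) ℝ) : ℝ :=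
  Real.sqrt (∑ i, ∑ j, (M i j) ^ 2)

/-- Entrywise application of `σ` to a matrix. -/
def entrywise (σ : ℝ → ℝ) {m n : ℕ} (M : Matrix (Fin m) (Fin n) ℝ) :
    Matrix (Fin m) (Fin n) ℝ :=
  Matrix.of fun i j => σ (M i j)

/-- `E_σ(r)`. -/
def Esig (σ : ℝ → ℝ) {din dout n : ℕ} (X : Matrix (Fin din) (Fin n) ℝ)
    (Y : Matrix (Fin dout) (Fin n) ℝ) (r : ℕ) : ℝ :=
  ⨅ (A : Matrix (Fin r) (Fin din) ℝ), ⨅ (B : Matrix (Fin dout) (Fin r) ℝ),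
    frobNorm (Y - B * entrywise σ (A * X))

/-- `E_id(r)`. -/
def Eid {din dout n : ℕ} (X : Matrix (Fin din) (Fin n) ℝ)
    (Y : Matrix (Fin dout) (Fin n) ℝ) (r : ℕ) : ℝ :=
  ⨅ (A : Matrix (Fin r) (Fin din) ℝ), ⨅ (B : Matrix (Fin dout) (Fin r) ℝ),
    frobNorm (Y - B * A * X)

/-- The (unsorted) singular values of `M`: square roots of eigenvalues of `Mᴴ * M`. -/
def svAux {m n : ℕ} (M : Matrix (Fin m) (Fin n) ℝ) : Fin n → ℝ :=
  fun i => Real.sqrt ((Matrix.isHermitian_conjTranspose_mul_self M).eigenvalues i)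

/-- Singular values of `M` sorted in non-increasing order (0-indexed). -/
def sv {m n : ℕ} (M : Matrix (Fin m) (Fin n) ℝ) : Fin n → ℝ :=
  fun i => svAux M (Tuple.sort (fun j => -(svAux M j)) i)

/-- `k`-th largest singular value (1-indexed, `0` for `k > n`). -/
def sVal {m n : ℕ} (M : Matrix (Fin m) (Fin n) ℝ) (k : ℕ) : ℝ :=
  if h : k - 1 < n then sv M ⟨k - 1, h⟩ else 0

/-- `s_{>k}(M) = √(∑_{j>k} s_j(M)²)` (with `j` 1-indexed). -/
def sGt {m n : ℕ} (M : Matrix (Fin m) (Fin n) ℝ) (k : ℕ) : ℝ :=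
  Real.sqrt (∑ j : Fin n, if k ≤ (j : ℕ) then (sv M j) ^ 2 else 0)

/-- Spectral (ℓ²-operator) norm of a real matrix. -/
def specNorm {m n : ℕ} (M : Matrix (Fin m) (Fin n) ℝ) : ℝ :=
  ‖LinearMap.toContinuousLinearMap (Matrix.toEuclideanLin M)‖

/-- Effective rank `r_α(M)`: the least `k` with `∑_{i≤k} s_i² ≥ α ∑_i s_i²`. -/
def effRank {m n : ℕ} (M : Matrix (Fin m) (Fin n) ℝ) (α : ℝ) : ℕ :=
  sInf {k : ℕ |
    α * ∑ i : Fin n, (sv M i) ^ 2 ≤ ∑ i : Fin n, if (i : ℕ) < k then (sv M i) ^ 2 else 0}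

/-- Row space of `X` inside `Fin n → ℝ`. -/
def rowSpace {d n : ℕ} (X : Matrix (Fin d) (Fin n) ℝ) : Submodule ℝ (Fin n → ℝ) :=
  Submodule.span ℝ (Set.range X)

/-- Row space of `X` as a submodule of Euclidean space. -/
def rowSpaceE {d n : ℕ} (X : Matrix (Fin d) (Fin n) ℝ) :
    Submodule ℝ (EuclideanSpace ℝ (Fin n)) :=
  Submodule.span ℝ (Set.range fun i => (WithLp.equiv 2 (Fin n → ℝ)).symm (X i))

/-- Row-wise orthogonal projection of the rows of `Y` onto the subspace `S`. -/
def projRows {dout n : ℕ} (S : Submodule ℝ (EuclideanSpace ℝ (Fin n)))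
    (Y : Matrix (Fin dout) (Fin n) ℝ) : Matrix (Fin dout) (Fin n) ℝ :=
  Matrix.of fun i => WithLp.equiv 2 (Fin n → ℝ)
    ((S.orthogonalProjectionOnto ((WithLp.equiv 2 (Fin n → ℝ)).symm (Y i)) :
      EuclideanSpace ℝ (Fin n)))

/-- Row-wise orthogonal projection onto the orthogonal complement of `span{v}`. -/
def projVperp {dout n : ℕ} (v : Fin n → ℝ) (Y : Matrix (Fin dout) (Fin n) ℝ) :
    Matrix (Fin dout) (Fin n) ℝ :=
  projRows (Submodule.span ℝ {(WithLp.equiv 2 (Fin n → ℝ)).symm v})ᗮ Y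


open Filter Topology in
private lemma scale_tendsto {σ : ℝ → ℝ} (hσ0 : σ 0 = 0) (hσdiff : DifferentiableAt ℝ σ 0)
    (hσ' : deriv σ 0 ≠ 0) (t : ℝ) :
    Tendsto (fun ε : ℝ => (ε * deriv σ 0)⁻¹ * σ (ε * t)) (𝓝[≠] 0) (𝓝 t) := by
  set c := deriv σ 0 with hc
  rcases eq_or_ne t 0 with rfl | ht
  · simpa [hσ0] using (tendsto_const_nhds : Tendsto (fun _ : ℝ => (0:ℝ)) (𝓝[≠] 0) (𝓝 0))
  · have hslope : Tendsto (slope σ 0) (𝓝[≠] (0:ℝ)) (𝓝 c) :=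
      hasDerivAt_iff_tendsto_slope.mp hσdiff.hasDerivAt
    have h1 : Tendsto (fun ε : ℝ => ε * t) (𝓝[≠] (0:ℝ)) (𝓝[≠] (0:ℝ)) := by
      rw [tendsto_nhdsWithin_iff]
      constructor
      · simpa using ((continuous_mul_right t).tendsto 0).mono_left nhdsWithin_le_nhds
      · filter_upwards [self_mem_nhdsWithin] with ε hε
        simp only [Set.mem_compl_iff, Set.mem_singleton_iff] at hε ⊢
        exact mul_ne_zero hε ht
    have h2 : Tendsto (fun ε : ℝ => slope σ 0 (ε * t)) (𝓝[≠] (0:ℝ)) (𝓝 c) := hslope.comp h1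
    have h3 : Tendsto (fun ε : ℝ => slope σ 0 (ε * t) * (t / c)) (𝓝[≠] (0:ℝ))
        (𝓝 (c * (t / c))) := h2.mul tendsto_const_nhds
    have hcne : c ≠ 0 := hσ'
    have hct : c * (t / c) = t := by field_simp
    rw [hct] at h3
    refine h3.congr' ?_
    filter_upwards [self_mem_nhdsWithin] with ε hε
    simp only [Set.mem_compl_iff, Set.mem_singleton_iff] at hε
    rw [slope_def_field, hσ0]
    field_simp
    ring

open Filter Topology in
private lemma esig_le {din dout n r : ℕ}
    (X : Matrix (Fin din) (Fin n) ℝ) (Y : Matrix (Fin dout) (Fin n) ℝ)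
    (σ : ℝ → ℝ) (hσ0 : σ 0 = 0) (hσdiff : DifferentiableAt ℝ σ 0)
    (hσ' : deriv σ 0 ≠ 0)
    (A : Matrix (Fin r) (Fin din) ℝ) (B : Matrix (Fin dout) (Fin r) ℝ) :
    Esig σ X Y r ≤ frobNorm (Y - B * A * X) := by
  set c := deriv σ 0 with hc
  set Z := A * X with hZ
  set g : ℝ → ℝ := fun ε =>
    frobNorm (Y - ((ε * c)⁻¹ • B) * entrywise σ ((ε • A) * X)) with hg
  have hnonneg : ∀ {m k : ℕ} (M : Matrix (Fin m) (Fin k) ℝ), 0 ≤ frobNorm M :=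
    fun M => Real.sqrt_nonneg _
  have hle : ∀ ε : ℝ, Esig σ X Y r ≤ g ε := by
    intro ε
    have hbB : ∀ A' : Matrix (Fin r) (Fin din) ℝ,
        BddBelow (Set.range fun B' : Matrix (Fin dout) (Fin r) ℝ =>
          frobNorm (Y - B' * entrywise σ (A' * X))) := by
      intro A'
      exact ⟨0, by rintro x ⟨B', rfl⟩; exact hnonneg _⟩
    have hbA : BddBelow (Set.range fun A' : Matrix (Fin r) (Fin din) ℝ =>
        ⨅ B' : Matrix (Fin dout) (Fin r) ℝ, frobNorm (Y - B' * entrywise σ (A' * X))) := by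
      refine ⟨0, ?_⟩
      rintro x ⟨A', rfl⟩
      exact Real.iInf_nonneg fun B' => hnonneg _
    calc Esig σ X Y r ≤ ⨅ B' : Matrix (Fin dout) (Fin r) ℝ,
          frobNorm (Y - B' * entrywise σ ((ε • A) * X)) := ciInf_le hbA _
      _ ≤ g ε := ciInf_le (hbB _) _
  have hentry : ∀ i j, Tendsto (fun ε : ℝ =>
      (Y - ((ε * c)⁻¹ • B) * entrywise σ ((ε • A) * X)) i j)
      (𝓝[≠] (0:ℝ)) (𝓝 ((Y - B * A * X) i j)) := by
    intro i j
    have hsum : Tendsto (fun ε : ℝ => Y i j - ∑ k, B i k * ((ε * c)⁻¹ * σ (ε * Z k j)))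
        (𝓝[≠] (0:ℝ)) (𝓝 (Y i j - ∑ k, B i k * Z k j)) := by
      refine tendsto_const_nhds.sub (tendsto_finset_sum _ fun k _ => ?_)
      exact tendsto_const_nhds.mul (scale_tendsto hσ0 hσdiff hσ' _)
    have heq1 : ∀ ε : ℝ, (Y - ((ε * c)⁻¹ • B) * entrywise σ ((ε • A) * X)) i j
        = Y i j - ∑ k, B i k * ((ε * c)⁻¹ * σ (ε * Z k j)) := by
      intro ε
      have hmul : (ε • A) * X = ε • Z := by rw [Matrix.smul_mul, hZ]
      rw [hmul]
      simp only [Matrix.sub_apply, Matrix.mul_apply, Matrix.smul_apply, entrywise,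
        Matrix.of_apply, smul_eq_mul]
      congr 1
      exact Finset.sum_congr rfl fun k _ => by ring
    have heq2 : (Y - B * A * X) i j = Y i j - ∑ k, B i k * Z k j := by
      rw [Matrix.mul_assoc, ← hZ, Matrix.sub_apply, Matrix.mul_apply]
    rw [heq2]
    exact hsum.congr fun ε => (heq1 ε).symm
  have htend : Tendsto g (𝓝[≠] (0:ℝ)) (𝓝 (frobNorm (Y - B * A * X))) := by
    have hsq : Tendsto (fun ε : ℝ => ∑ i, ∑ j,
        ((Y - ((ε * c)⁻¹ • B) * entrywise σ ((ε • A) * X)) i j) ^ 2)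
        (𝓝[≠] (0:ℝ)) (𝓝 (∑ i, ∑ j, ((Y - B * A * X) i j) ^ 2)) := by
      refine tendsto_finset_sum _ fun i _ => tendsto_finset_sum _ fun j _ => ?_
      exact (hentry i j).pow 2
    exact (Real.continuous_sqrt.tendsto _).comp hsq
  exact ge_of_tendsto htend (Filter.Eventually.of_forall hle)

/-- Proposition 1: if `σ(0) = 0`, `σ` is differentiable at `0`
and `σ'(0) ≠ 0`, then `E_σ(r) ≤ E_id(r)`. -/
theorem stmt0 {din dout n r : ℕ}
    (X : Matrix (Fin din) (Fin n) ℝ) (Y : Matrix (Fin dout) (Fin n) ℝ)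
    (σ : ℝ → ℝ) (hσ0 : σ 0 = 0) (hσdiff : DifferentiableAt ℝ σ 0)
    (hσ' : deriv σ 0 ≠ 0) :
    Esig σ X Y r ≤ Eid X Y r := by
  exact le_ciInf fun A => le_ciInf fun B => esig_le X Y σ hσ0 hσdiff hσ' A B

end

end CoLA
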